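/- Let E be a 2×2 matrix whose entries are linear forms in variables x_1, …, x_c over ℂ, and suppose det(E) = x_1 x_4 − x_2 x_3. Then there exist invertible 2×2 complex matrices U, V such that U E V equals either the matrix with rows (x_1, x_2), (x_3, x_4), or its transpose (rows (x_1, x_3), (x_2, x_4)). -/

import Mathlib

open MvPolynomial Matrix



private lemma degree_one_single {c : ℕ} (d : Fin c →₀ ℕ) (h : d.degree = 1) :
    ∃ k, d = Finsupp.single k 1 := by
  have hne : d.support.Nonempty := by
    rw [Finsupp.support_nonempty_iff]
    rintro rfl
    simp [map_zero] at h
  obtain ⟨a, ha⟩ := hne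
  have hda : d a ≤ 1 := h ▸ Finsupp.le_degree a d
  have hda1 : d a = 1 := by
    have := Finsupp.mem_support_iff.mp ha
    omega
  refine ⟨a, ?_⟩
  have hsub : d.support ⊆ {a} := by
    intro b hb
    by_contra hba
    simp only [Finset.mem_singleton] at hba
    have hdb : 0 < d b := Nat.pos_of_ne_zero (Finsupp.mem_support_iff.mp hb)
    have : 2 ≤ d.degree := by
      have : ({a, b} : Finset (Fin c)) ⊆ d.support := by
        intro x hx
        simp only [Finset.mem_insert, Finset.mem_singleton] at hx
        rcases hx with rfl | rfl
        · exact ha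
        · exact hb
      calc 2 ≤ ∑ x ∈ ({a, b} : Finset (Fin c)), d x := by
              rw [Finset.sum_pair (fun hh => hba hh.symm)]; omega
        _ ≤ ∑ x ∈ d.support, d x := Finset.sum_le_sum_of_subset this
        _ = d.degree := rfl
    omega
  have := Finsupp.support_subset_singleton.mp hsub
  rwa [hda1] at this

private lemma linear_form_eq {c : ℕ} (p : MvPolynomial (Fin c) ℂ) (hp : p.IsHomogeneous 1) :
    p = ∑ k, C (coeff (Finsupp.single k 1) p) * X k := by
  apply MvPolynomial.ext
  intro m
  rw [MvPolynomial.coeff_sum]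
  simp only [coeff_C_mul, MvPolynomial.coeff_X']
  by_cases hm : ∃ k, m = Finsupp.single k 1
  · obtain ⟨k0, rfl⟩ := hm
    rw [Finset.sum_eq_single k0]
    · simp
    · intro b _ hb
      rw [if_neg, mul_zero]
      intro hh
      exact hb (by
        rcases (Finsupp.single_eq_single_iff _ _ _ _).mp hh with ⟨h', _⟩ | ⟨h', _⟩
        · exact h'
        · exact absurd h' one_ne_zero)
    · simp
  · have : coeff m p = 0 := by
      apply hp.coeff_eq_zero
      intro hdeg
      exact hm (by
        obtain ⟨k, hk⟩ := degree_one_single m hdeg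
        exact ⟨k, hk⟩)
    rw [this]
    symm
    apply Finset.sum_eq_zero
    intro k _
    rw [if_neg, mul_zero]
    intro hh
    exact hm ⟨k, hh.symm⟩


private lemma conj_sum {c : ℕ} (U V : Matrix (Fin 2) (Fin 2) ℂ)
    (A : Fin c → Matrix (Fin 2) (Fin 2) ℂ) :
    U.map (C : ℂ →+* MvPolynomial (Fin c) ℂ) * (∑ k, (X k : MvPolynomial (Fin c) ℂ) • (A k).map (C : ℂ →+* MvPolynomial (Fin c) ℂ)) *
      V.map (C : ℂ →+* MvPolynomial (Fin c) ℂ) =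
      ∑ k, (X k : MvPolynomial (Fin c) ℂ) • ((U * A k * V).map (C : ℂ →+* MvPolynomial (Fin c) ℂ)) := by
  rw [Finset.mul_sum, Finset.sum_mul]
  refine Finset.sum_congr rfl fun k _ => ?_
  rw [Matrix.mul_smul, Matrix.smul_mul, Matrix.map_mul, Matrix.map_mul]


private lemma sum_ind_one {c : ℕ} (N : Fin c → Matrix (Fin 2) (Fin 2) ℂ) (a : Fin c) :
    ∑ k, (if k = a then (1:ℂ) else 0) • N k = N a := by
  rw [Finset.sum_eq_single a]
  · simp
  · intro b _ hb; simp [hb]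
  · simp

private lemma sum_ind_two {c : ℕ} (N : Fin c → Matrix (Fin 2) (Fin 2) ℂ) (a b : Fin c) :
    ∑ k, ((if k = a then (1:ℂ) else 0) + (if k = b then (1:ℂ) else 0)) • N k = N a + N b := by
  simp only [add_smul]
  rw [Finset.sum_add_distrib, sum_ind_one, sum_ind_one]

private lemma endgame {c : ℕ} (n0 n1 n2 n3 : Fin c)
    (h01 : n0 ≠ n1) (h02 : n0 ≠ n2) (h03 : n0 ≠ n3)
    (h12 : n1 ≠ n2) (h13 : n1 ≠ n3) (h23 : n2 ≠ n3)
    (N : Fin c → Matrix (Fin 2) (Fin 2) ℂ) (μ : ℂ)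
    (hQ : ∀ x : Fin c → ℂ,
      (∑ k, x k • N k).det = μ * (x n0 * x n3 - x n1 * x n2))
    (h0 : N n0 = !![1,0;0,0]) (h1 : N n1 = !![0,0;1,0]) (h2 : N n2 = !![0,1;0,0]) :
    N n3 = !![0,0;0,1] ∧ ∀ k, k ≠ n0 → k ≠ n1 → k ≠ n2 → k ≠ n3 → N k = 0 := by
  -- one-point evaluations
  have key1 : ∀ a : Fin c, (N a).det =
      μ * ((if n0 = a then (1:ℂ) else 0) * (if n3 = a then (1:ℂ) else 0) -
        (if n1 = a then (1:ℂ) else 0) * (if n2 = a then (1:ℂ) else 0)) := by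
    intro a
    have := hQ (fun k => if k = a then (1:ℂ) else 0)
    rw [sum_ind_one] at this
    simpa [eq_comm] using this
  have key2 : ∀ a b : Fin c, (N a + N b).det =
      μ * (((if n0 = a then (1:ℂ) else 0) + (if n0 = b then (1:ℂ) else 0)) *
           ((if n3 = a then (1:ℂ) else 0) + (if n3 = b then (1:ℂ) else 0)) -
           ((if n1 = a then (1:ℂ) else 0) + (if n1 = b then (1:ℂ) else 0)) *
           ((if n2 = a then (1:ℂ) else 0) + (if n2 = b then (1:ℂ) else 0))) := by
    intro a b
    have := hQ (fun k => (if k = a then (1:ℂ) else 0) + (if k = b then (1:ℂ) else 0))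
    rw [sum_ind_two] at this
    simpa [eq_comm] using this
  -- μ = 1
  have hmu : μ = 1 := by
    have := key2 n1 n2
    rw [h1, h2, det_fin_two] at this
    simp [h01, h02, h12, h13, h23, h12.symm, Matrix.add_apply] at this
    exact this.symm
  subst hmu
  have hN3 : N n3 = !![0,0;0,1] := by
    set p := N n3 0 0 with hp
    set q := N n3 0 1 with hq
    set r := N n3 1 0 with hr
    set s := N n3 1 1 with hs
    have e3 : p * s - q * r = 0 := by
      have := key1 n3
      rw [det_fin_two] at this
      simpa [h01, h02, h03, h12, h13, h23, h01.symm, h02.symm, h03.symm, h12.symm, h13.symm, h23.symm] using this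
    have es : s = 1 := by
      have := key2 n0 n3
      rw [h0, det_fin_two] at this
      simp [h01, h02, h03, h12, h13, h23, h01.symm, h02.symm, h03.symm, h12.symm, h13.symm, h23.symm, Matrix.add_apply] at this
      linear_combination this - e3
    have eq' : q = 0 := by
      have := key2 n1 n3
      rw [h1, det_fin_two] at this
      simp [h01, h02, h03, h12, h13, h23, h01.symm, h02.symm, h03.symm, h12.symm, h13.symm, h23.symm, Matrix.add_apply] at this
      linear_combination e3 - this
    have er : r = 0 := by
      have := key2 n2 n3
      rw [h2, det_fin_two] at this
      simp [h01, h02, h03, h12, h13, h23, h01.symm, h02.symm, h03.symm, h12.symm, h13.symm, h23.symm, Matrix.add_apply] at this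
      linear_combination e3 - this
    have ep : p = 0 := by
      rw [es, eq'] at e3; linear_combination e3
    rw [Matrix.eta_fin_two (N n3), ← hp, ← hq, ← hr, ← hs, ep, eq', er, es]
  refine ⟨hN3, ?_⟩
  intro k hk0 hk1 hk2 hk3
  set p := N k 0 0 with hp
  set q := N k 0 1 with hq
  set r := N k 1 0 with hr
  set s := N k 1 1 with hs
  have e0 : p * s - q * r = 0 := by
    have := key1 k
    rw [det_fin_two] at this
    simpa [h01, h02, h03, h12, h13, h23, h01.symm, h02.symm, h03.symm, h12.symm, h13.symm, h23.symm, Ne.symm hk0, Ne.symm hk1, Ne.symm hk2, Ne.symm hk3] using this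
  have es : s = 0 := by
    have := key2 n0 k
    rw [h0, det_fin_two] at this
    simp [h01, h02, h03, h12, h13, h23, h01.symm, h02.symm, h03.symm, h12.symm, h13.symm, h23.symm, Ne.symm hk0, Ne.symm hk1, Ne.symm hk2, Ne.symm hk3, Matrix.add_apply] at this
    linear_combination this - e0
  have ep : p = 0 := by
    have := key2 n3 k
    rw [hN3, det_fin_two] at this
    simp [h01, h02, h03, h12, h13, h23, h01.symm, h02.symm, h03.symm, h12.symm, h13.symm, h23.symm, Ne.symm hk0, Ne.symm hk1, Ne.symm hk2, Ne.symm hk3, Matrix.add_apply] at this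
    linear_combination this - e0
  have eq' : q = 0 := by
    have := key2 n1 k
    rw [h1, det_fin_two] at this
    simp [h01, h02, h03, h12, h13, h23, h01.symm, h02.symm, h03.symm, h12.symm, h13.symm, h23.symm, Ne.symm hk0, Ne.symm hk1, Ne.symm hk2, Ne.symm hk3, Matrix.add_apply] at this
    linear_combination e0 - this
  have er : r = 0 := by
    have := key2 n2 k
    rw [h2, det_fin_two] at this
    simp [h01, h02, h03, h12, h13, h23, h01.symm, h02.symm, h03.symm, h12.symm, h13.symm, h23.symm, Ne.symm hk0, Ne.symm hk1, Ne.symm hk2, Ne.symm hk3, Matrix.add_apply] at this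
    linear_combination e0 - this
  rw [Matrix.eta_fin_two (N k), ← hp, ← hq, ← hr, ← hs, ep, eq', er, es]
  ext i j
  fin_cases i <;> fin_cases j <;> simp


private lemma rank_one_normalize (M : Matrix (Fin 2) (Fin 2) ℂ) (hdet : M.det = 0)
    (hM : M ≠ 0) :
    ∃ P Q : GL (Fin 2) ℂ,
      (P : Matrix (Fin 2) (Fin 2) ℂ) * M * (Q : Matrix (Fin 2) (Fin 2) ℂ) = !![1,0;0,0] := by
  rw [det_fin_two] at hdet
  have hMe := Matrix.eta_fin_two M
  set a := M 0 0 with ha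
  set b := M 0 1 with hb
  set c := M 1 0 with hc
  set d := M 1 1 with hd
  by_cases ha0 : a ≠ 0
  · refine ⟨GeneralLinearGroup.mkOfDetNeZero !![1/a, 0; -c/a, 1] (by
        rw [det_fin_two_of]; field_simp; simp [ha0]),
      GeneralLinearGroup.mkOfDetNeZero !![1, -b/a; 0, 1] (by
        rw [det_fin_two_of]; norm_num), ?_⟩
    show !![1/a, 0; -c/a, 1] * M * !![1, -b/a; 0, 1] = _
    rw [hMe, mul_fin_two, mul_fin_two]
    ext i j
    fin_cases i <;> fin_cases j <;> simp <;> field_simp <;> ring_nf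
    linear_combination hdet
  push_neg at ha0
  by_cases hb0 : b ≠ 0
  · have hc0 : c = 0 := by
      have : b * c = 0 := by rw [ha0] at hdet; linear_combination -hdet
      rcases mul_eq_zero.mp this with h | h
      · exact absurd h hb0
      · exact h
    refine ⟨GeneralLinearGroup.mkOfDetNeZero !![1/b, 0; -d/b, 1] (by
        rw [det_fin_two_of]; field_simp; simp [hb0]),
      GeneralLinearGroup.mkOfDetNeZero !![0, 1; 1, 0] (by
        rw [det_fin_two_of]; norm_num), ?_⟩
    show !![1/b, 0; -d/b, 1] * M * !![0, 1; 1, 0] = _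
    rw [hMe, ha0, hc0, mul_fin_two, mul_fin_two]
    ext i j
    fin_cases i <;> fin_cases j <;> simp <;> field_simp <;> ring
  push_neg at hb0
  by_cases hc0 : c ≠ 0
  · refine ⟨GeneralLinearGroup.mkOfDetNeZero !![0, 1/c; 1, 0] (by
        rw [det_fin_two_of]; field_simp; simp [hc0]),
      GeneralLinearGroup.mkOfDetNeZero !![1, -d/c; 0, 1] (by
        rw [det_fin_two_of]; norm_num), ?_⟩
    show !![0, 1/c; 1, 0] * M * !![1, -d/c; 0, 1] = _
    rw [hMe, ha0, hb0, mul_fin_two, mul_fin_two]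
    ext i j
    fin_cases i <;> fin_cases j <;> simp <;> field_simp <;> ring
  push_neg at hc0
  have hd0 : d ≠ 0 := by
    intro hd0
    apply hM
    rw [hMe, ha0, hb0, hc0, hd0]
    ext i j
    fin_cases i <;> fin_cases j <;> simp
  refine ⟨GeneralLinearGroup.mkOfDetNeZero !![0, 1/d; 1, 0] (by
      rw [det_fin_two_of]; field_simp; simp [hd0]),
    GeneralLinearGroup.mkOfDetNeZero !![0, 1; 1, 0] (by
      rw [det_fin_two_of]; norm_num), ?_⟩
  show !![0, 1/d; 1, 0] * M * !![0, 1; 1, 0] = _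
  rw [hMe, ha0, hb0, hc0, mul_fin_two, mul_fin_two]
  ext i j
  fin_cases i <;> fin_cases j <;> simp <;> field_simp

private lemma key1' {c : ℕ} (n0 n1 n2 n3 : Fin c)
    (N : Fin c → Matrix (Fin 2) (Fin 2) ℂ) (μ : ℂ)
    (hQ : ∀ x : Fin c → ℂ,
      (∑ k, x k • N k).det = μ * (x n0 * x n3 - x n1 * x n2)) (a : Fin c) :
    (N a).det = μ * ((if n0 = a then (1:ℂ) else 0) * (if n3 = a then (1:ℂ) else 0) -
        (if n1 = a then (1:ℂ) else 0) * (if n2 = a then (1:ℂ) else 0)) := by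
  have := hQ (fun k => if k = a then (1:ℂ) else 0)
  rw [sum_ind_one] at this
  simpa [eq_comm] using this

private lemma key2' {c : ℕ} (n0 n1 n2 n3 : Fin c)
    (N : Fin c → Matrix (Fin 2) (Fin 2) ℂ) (μ : ℂ)
    (hQ : ∀ x : Fin c → ℂ,
      (∑ k, x k • N k).det = μ * (x n0 * x n3 - x n1 * x n2)) (a b : Fin c) :
    (N a + N b).det =
      μ * (((if n0 = a then (1:ℂ) else 0) + (if n0 = b then (1:ℂ) else 0)) *
           ((if n3 = a then (1:ℂ) else 0) + (if n3 = b then (1:ℂ) else 0)) -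
           ((if n1 = a then (1:ℂ) else 0) + (if n1 = b then (1:ℂ) else 0)) *
           ((if n2 = a then (1:ℂ) else 0) + (if n2 = b then (1:ℂ) else 0))) := by
  have := hQ (fun k => (if k = a then (1:ℂ) else 0) + (if k = b then (1:ℂ) else 0))
  rw [sum_ind_two] at this
  simpa [eq_comm] using this

private lemma conj_sum' {c : ℕ} (U V : Matrix (Fin 2) (Fin 2) ℂ)
    (A : Fin c → Matrix (Fin 2) (Fin 2) ℂ) (x : Fin c → ℂ) :
    U * (∑ k, x k • A k) * V = ∑ k, x k • (U * A k * V) := by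
  rw [Finset.mul_sum, Finset.sum_mul]
  refine Finset.sum_congr rfl fun k _ => ?_
  rw [Matrix.mul_smul, Matrix.smul_mul]

private lemma sum_collapse4 {c : ℕ} (n0 n1 n2 n3 : Fin c)
    (h01 : n0 ≠ n1) (h02 : n0 ≠ n2) (h03 : n0 ≠ n3)
    (h12 : n1 ≠ n2) (h13 : n1 ≠ n3) (h23 : n2 ≠ n3)
    (W : Fin c → Matrix (Fin 2) (Fin 2) ℂ)
    (hz : ∀ k, k ≠ n0 → k ≠ n1 → k ≠ n2 → k ≠ n3 → W k = 0) :
    ∑ k, (X k : MvPolynomial (Fin c) ℂ) • (W k).map (C : ℂ →+* MvPolynomial (Fin c) ℂ) =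
      (X n0 : MvPolynomial (Fin c) ℂ) • (W n0).map (C : ℂ →+* MvPolynomial (Fin c) ℂ) +
      (X n1 : MvPolynomial (Fin c) ℂ) • (W n1).map (C : ℂ →+* MvPolynomial (Fin c) ℂ) +
      (X n2 : MvPolynomial (Fin c) ℂ) • (W n2).map (C : ℂ →+* MvPolynomial (Fin c) ℂ) +
      (X n3 : MvPolynomial (Fin c) ℂ) • (W n3).map (C : ℂ →+* MvPolynomial (Fin c) ℂ) := by
  rw [← Finset.sum_subset (Finset.subset_univ ({n0, n1, n2, n3} : Finset (Fin c)))]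
  · rw [Finset.sum_insert (by simp [h01, h02, h03]),
      Finset.sum_insert (by simp [h12, h13]),
      Finset.sum_insert (by simp [h23]), Finset.sum_singleton, add_assoc, add_assoc]
  · intro k _ hk
    simp only [Finset.mem_insert, Finset.mem_singleton, not_or] at hk
    rw [hz k hk.1 hk.2.1 hk.2.2.1 hk.2.2.2]
    simp

private lemma main_lemma {c : ℕ} (n0 n1 n2 n3 : Fin c)
    (h01 : n0 ≠ n1) (h02 : n0 ≠ n2) (h03 : n0 ≠ n3)
    (h12 : n1 ≠ n2) (h13 : n1 ≠ n3) (h23 : n2 ≠ n3)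
    (E : Matrix (Fin 2) (Fin 2) (MvPolynomial (Fin c) ℂ))
    (hlin : ∀ i j, (E i j).IsHomogeneous 1)
    (hdet : E.det = X n0 * X n3 - X n1 * X n2) :
    ∃ U V : GL (Fin 2) ℂ,
      (U : Matrix (Fin 2) (Fin 2) ℂ).map MvPolynomial.C * E *
        (V : Matrix (Fin 2) (Fin 2) ℂ).map MvPolynomial.C =
        !![X n0, X n1; X n2, X n3] ∨
      (U : Matrix (Fin 2) (Fin 2) ℂ).map MvPolynomial.C * E *
        (V : Matrix (Fin 2) (Fin 2) ℂ).map MvPolynomial.C =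
        !![X n0, X n2; X n1, X n3] := by
  classical
  set A : Fin c → Matrix (Fin 2) (Fin 2) ℂ :=
    fun k => Matrix.of fun i j => coeff (Finsupp.single k 1) (E i j) with hA
  have hAe : ∀ k i j, A k i j = coeff (Finsupp.single k 1) (E i j) := fun k i j => rfl
  have hE : E = ∑ k, (X k : MvPolynomial (Fin c) ℂ) •
      (A k).map (C : ℂ →+* MvPolynomial (Fin c) ℂ) := by
    refine Matrix.ext fun i j => ?_
    simp only [Matrix.sum_apply, Matrix.smul_apply, Matrix.map_apply, smul_eq_mul, hAe]
    conv_lhs => rw [linear_form_eq (E i j) (hlin i j)]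
    exact Finset.sum_congr rfl fun k _ => (mul_comm _ _)
  have hQ : ∀ x : Fin c → ℂ, (∑ k, x k • A k).det = x n0 * x n3 - x n1 * x n2 := by
    intro x
    have h1 : (eval x) E.det = (E.map (eval x)).det := RingHom.map_det (eval x) E
    have h2 : E.map (eval x) = ∑ k, x k • A k := by
      ext i j
      rw [Matrix.map_apply]
      conv_lhs => rw [linear_form_eq (E i j) (hlin i j)]
      rw [map_sum]
      simp only [_root_.map_mul, eval_C, eval_X, Matrix.sum_apply, Matrix.smul_apply,
        smul_eq_mul, hAe]
      exact Finset.sum_congr rfl fun k _ => (mul_comm _ _)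
    rw [hdet, h2] at h1
    simpa using h1.symm
  -- A n0 is nonzero with zero determinant
  have hdet0 : (A n0).det = 0 := by
    have := key1' n0 n1 n2 n3 A 1 (by simpa using hQ) n0
    simpa [h01, h02, h03, h01.symm, h02.symm, h03.symm] using this
  have hAn0 : A n0 ≠ 0 := by
    intro h0
    have := key2' n0 n1 n2 n3 A 1 (by simpa using hQ) n0 n3
    rw [h0, zero_add] at this
    have h3 : (A n3).det = 0 := by
      have := key1' n0 n1 n2 n3 A 1 (by simpa using hQ) n3
      simpa [h03, h13, h23, h03.symm, h13.symm, h23.symm] using this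
    rw [h3] at this
    simp [h01, h02, h03, h12, h13, h23, h01.symm, h02.symm, h03.symm, h12.symm,
      h13.symm, h23.symm] at this
  obtain ⟨P, Q, hPQ⟩ := rank_one_normalize (A n0) hdet0 hAn0
  set N1 : Fin c → Matrix (Fin 2) (Fin 2) ℂ :=
    fun k => (P : Matrix (Fin 2) (Fin 2) ℂ) * A k * (Q : Matrix (Fin 2) (Fin 2) ℂ) with hN1
  set μ1 : ℂ := ((P : Matrix (Fin 2) (Fin 2) ℂ).det * (Q : Matrix (Fin 2) (Fin 2) ℂ).det) with hμ1
  have hμ1ne : μ1 ≠ 0 := by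
    apply mul_ne_zero
    · exact ((Matrix.isUnit_iff_isUnit_det _).mp P.isUnit).ne_zero
    · exact ((Matrix.isUnit_iff_isUnit_det _).mp Q.isUnit).ne_zero
  have hQ1 : ∀ x : Fin c → ℂ,
      (∑ k, x k • N1 k).det = μ1 * (x n0 * x n3 - x n1 * x n2) := by
    intro x
    rw [hN1]
    rw [← conj_sum', det_mul, det_mul, hQ x, hμ1]
    ring
  have h10 : N1 n0 = !![1,0;0,0] := hPQ
  -- entries of N1 n1 and N1 n2
  set a1 := N1 n1 0 0 with ha1
  set b1 := N1 n1 0 1 with hb1v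
  set c1 := N1 n1 1 0 with hc1v
  set a2 := N1 n2 0 0 with ha2
  set b2 := N1 n2 0 1 with hb2v
  set c2 := N1 n2 1 0 with hc2v
  have hd1 : N1 n1 1 1 = 0 := by
    have h := key2' n0 n1 n2 n3 N1 μ1 hQ1 n0 n1
    have h' := key1' n0 n1 n2 n3 N1 μ1 hQ1 n1
    rw [h10, det_fin_two] at h
    rw [det_fin_two] at h'
    simp [h01, h02, h03, h12, h13, h23, h01.symm, h02.symm, h03.symm, h12.symm,
      h13.symm, h23.symm, Matrix.add_apply] at h h'
    linear_combination h - h'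
  have hd2 : N1 n2 1 1 = 0 := by
    have h := key2' n0 n1 n2 n3 N1 μ1 hQ1 n0 n2
    have h' := key1' n0 n1 n2 n3 N1 μ1 hQ1 n2
    rw [h10, det_fin_two] at h
    rw [det_fin_two] at h'
    simp [h01, h02, h03, h12, h13, h23, h01.symm, h02.symm, h03.symm, h12.symm,
      h13.symm, h23.symm, Matrix.add_apply] at h h'
    linear_combination h - h'
  have e1 : b1 * c1 = 0 := by
    have h' := key1' n0 n1 n2 n3 N1 μ1 hQ1 n1
    rw [det_fin_two] at h'
    simp [h01, h02, h03, h12, h13, h23, h01.symm, h02.symm, h03.symm, h12.symm,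
      h13.symm, h23.symm, hd1] at h'
    rcases h' with h | h
    · rw [hb1v, h, zero_mul]
    · rw [hc1v, h, mul_zero]
  have e2 : b2 * c2 = 0 := by
    have h' := key1' n0 n1 n2 n3 N1 μ1 hQ1 n2
    rw [det_fin_two] at h'
    simp [h01, h02, h03, h12, h13, h23, h01.symm, h02.symm, h03.symm, h12.symm,
      h13.symm, h23.symm, hd2] at h'
    rcases h' with h | h
    · rw [hb2v, h, zero_mul]
    · rw [hc2v, h, mul_zero]
  have e12 : b1 * c2 + c1 * b2 = μ1 := by
    have h := key2' n0 n1 n2 n3 N1 μ1 hQ1 n1 n2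
    rw [det_fin_two] at h
    simp [h01, h02, h03, h12, h13, h23, h01.symm, h02.symm, h03.symm, h12.symm,
      h13.symm, h23.symm, Matrix.add_apply, hd1, hd2] at h
    simp only [← ha1, ← hb1v, ← hc1v, ← ha2, ← hb2v, ← hc2v] at h
    linear_combination h - e1 - e2
  have hM1e : N1 n1 = !![a1, b1; c1, 0] := by
    rw [Matrix.eta_fin_two (N1 n1), ← ha1, ← hb1v, ← hc1v, hd1]
  have hM2e : N1 n2 = !![a2, b2; c2, 0] := by
    rw [Matrix.eta_fin_two (N1 n2), ← ha2, ← hb2v, ← hc2v, hd2]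
  by_cases hb1 : b1 = 0
  · -- transpose case
    have hcb : c1 * b2 = μ1 := by rw [hb1] at e12; linear_combination e12
    have hc1 : c1 ≠ 0 := fun h => hμ1ne (by rw [← hcb, h, zero_mul])
    have hb2 : b2 ≠ 0 := fun h => hμ1ne (by rw [← hcb, h, mul_zero])
    have hc2 : c2 = 0 := by
      rcases mul_eq_zero.mp e2 with h | h
      · exact absurd h hb2
      · exact h
    set U' : Matrix (Fin 2) (Fin 2) ℂ := !![1, -a1/c1; 0, 1/c1] with hU'
    set V' : Matrix (Fin 2) (Fin 2) ℂ := !![1, 0; -a2/b2, 1/b2] with hV'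
    have hU'det : U'.det ≠ 0 := by rw [hU', det_fin_two_of]; field_simp; simp [hc1]
    have hV'det : V'.det ≠ 0 := by rw [hV', det_fin_two_of]; field_simp; simp [hb2]
    set N2 : Fin c → Matrix (Fin 2) (Fin 2) ℂ := fun k => U' * N1 k * V' with hN2
    have hQ2 : ∀ x : Fin c → ℂ,
        (∑ k, x k • N2 k).det = (U'.det * V'.det * μ1) * (x n0 * x n3 - x n1 * x n2) := by
      intro x
      rw [hN2, ← conj_sum', det_mul, det_mul, hQ1 x]
      ring
    have hN20 : N2 n0 = !![1,0;0,0] := by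
      show U' * N1 n0 * V' = _
      rw [h10, hU', hV', mul_fin_two, mul_fin_two]
      ext i j
      fin_cases i <;> fin_cases j <;> simp <;> (field_simp; try ring)
    have hN21 : N2 n1 = !![0,0;1,0] := by
      show U' * N1 n1 * V' = _
      rw [hM1e, hb1, hU', hV', mul_fin_two, mul_fin_two]
      ext i j
      fin_cases i <;> fin_cases j <;> simp <;> (field_simp; try ring)
    have hN22 : N2 n2 = !![0,1;0,0] := by
      show U' * N1 n2 * V' = _
      rw [hM2e, hc2, hU', hV', mul_fin_two, mul_fin_two]
      ext i j
      fin_cases i <;> fin_cases j <;> simp <;> (field_simp; try ring)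
    obtain ⟨hN23, hzero⟩ := endgame n0 n1 n2 n3 h01 h02 h03 h12 h13 h23 N2
      (U'.det * V'.det * μ1) hQ2 hN20 hN21 hN22
    refine ⟨(GeneralLinearGroup.mkOfDetNeZero U' hU'det) * P, Q * (GeneralLinearGroup.mkOfDetNeZero V' hV'det), Or.inr ?_⟩
    have hconj : ∀ k : Fin c,
        (((GeneralLinearGroup.mkOfDetNeZero U' hU'det) * P : GL (Fin 2) ℂ) : Matrix (Fin 2) (Fin 2) ℂ) * A k *
        ((Q * (GeneralLinearGroup.mkOfDetNeZero V' hV'det) : GL (Fin 2) ℂ) : Matrix (Fin 2) (Fin 2) ℂ) = N2 k := by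
      intro k
      rw [Units.val_mul, Units.val_mul]
      show U' * (P : Matrix (Fin 2) (Fin 2) ℂ) * A k * ((Q : Matrix (Fin 2) (Fin 2) ℂ) * V') = _
      rw [hN2, hN1]
      noncomm_ring
    rw [hE, conj_sum]
    simp only [hconj]
    rw [sum_collapse4 n0 n1 n2 n3 h01 h02 h03 h12 h13 h23 N2 hzero,
      hN20, hN21, hN22, hN23]
    ext i j
    fin_cases i <;> fin_cases j <;> simp
  · -- direct case
    have hc1 : c1 = 0 := by
      rcases mul_eq_zero.mp e1 with h | h
      · exact absurd h hb1
      · exact h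
    have hbc : b1 * c2 = μ1 := by rw [hc1] at e12; linear_combination e12
    have hc2 : c2 ≠ 0 := fun h => hμ1ne (by rw [← hbc, h, mul_zero])
    have hb2 : b2 = 0 := by
      rcases mul_eq_zero.mp e2 with h | h
      · exact h
      · exact absurd h hc2
    set U' : Matrix (Fin 2) (Fin 2) ℂ := !![1, -a2/c2; 0, 1/c2] with hU'
    set V' : Matrix (Fin 2) (Fin 2) ℂ := !![1, 0; -a1/b1, 1/b1] with hV'
    have hU'det : U'.det ≠ 0 := by rw [hU', det_fin_two_of]; field_simp; simp [hc2]
    have hV'det : V'.det ≠ 0 := by rw [hV', det_fin_two_of]; field_simp; simp [hb1]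
    set N2 : Fin c → Matrix (Fin 2) (Fin 2) ℂ := fun k => U' * N1 k * V' with hN2
    have hQ2 : ∀ x : Fin c → ℂ,
        (∑ k, x k • N2 k).det = (U'.det * V'.det * μ1) * (x n0 * x n3 - x n2 * x n1) := by
      intro x
      rw [hN2, ← conj_sum', det_mul, det_mul, hQ1 x]
      ring
    have hN20 : N2 n0 = !![1,0;0,0] := by
      show U' * N1 n0 * V' = _
      rw [h10, hU', hV', mul_fin_two, mul_fin_two]
      ext i j
      fin_cases i <;> fin_cases j <;> simp <;> (field_simp; try ring)
    have hN21 : N2 n1 = !![0,1;0,0] := by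
      show U' * N1 n1 * V' = _
      rw [hM1e, hc1, hU', hV', mul_fin_two, mul_fin_two]
      ext i j
      fin_cases i <;> fin_cases j <;> simp <;> (field_simp; try ring)
    have hN22 : N2 n2 = !![0,0;1,0] := by
      show U' * N1 n2 * V' = _
      rw [hM2e, hb2, hU', hV', mul_fin_two, mul_fin_two]
      ext i j
      fin_cases i <;> fin_cases j <;> simp <;> (field_simp; try ring)
    obtain ⟨hN23, hzero⟩ := endgame n0 n2 n1 n3 h02 h01 h03 h12.symm h23 h13 N2
      (U'.det * V'.det * μ1) hQ2 hN20 hN22 hN21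
    refine ⟨(GeneralLinearGroup.mkOfDetNeZero U' hU'det) * P, Q * (GeneralLinearGroup.mkOfDetNeZero V' hV'det), Or.inl ?_⟩
    have hconj : ∀ k : Fin c,
        (((GeneralLinearGroup.mkOfDetNeZero U' hU'det) * P : GL (Fin 2) ℂ) : Matrix (Fin 2) (Fin 2) ℂ) * A k *
        ((Q * (GeneralLinearGroup.mkOfDetNeZero V' hV'det) : GL (Fin 2) ℂ) : Matrix (Fin 2) (Fin 2) ℂ) = N2 k := by
      intro k
      rw [Units.val_mul, Units.val_mul]
      show U' * (P : Matrix (Fin 2) (Fin 2) ℂ) * A k * ((Q : Matrix (Fin 2) (Fin 2) ℂ) * V') = _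
      rw [hN2, hN1]
      noncomm_ring
    rw [hE, conj_sum]
    simp only [hconj]
    rw [sum_collapse4 n0 n1 n2 n3 h01 h02 h03 h12 h13 h23 N2
      (fun k hk0 hk1 hk2 hk3 => hzero k hk0 hk2 hk1 hk3),
      hN20, hN21, hN22, hN23]
    ext i j
    fin_cases i <;> fin_cases j <;> simp

/-- Lemma 7.1(2) of the paper: a `2×2` matrix of linear forms with determinant
`x₁x₄ - x₂x₃` equals `!![x₁, x₂; x₃, x₄]` or its transpose up to changes of bases. -/
theorem stmt6 (c : ℕ) (hc : 4 ≤ c)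
    (E : Matrix (Fin 2) (Fin 2) (MvPolynomial (Fin c) ℂ))
    (hlin : ∀ i j, (E i j).IsHomogeneous 1)
    (hdet : E.det = X (⟨0, by omega⟩ : Fin c) * X ⟨3, by omega⟩ -
      X ⟨1, by omega⟩ * X ⟨2, by omega⟩) :
    ∃ U V : GL (Fin 2) ℂ,
      (U : Matrix (Fin 2) (Fin 2) ℂ).map MvPolynomial.C * E *
        (V : Matrix (Fin 2) (Fin 2) ℂ).map MvPolynomial.C =
        !![X (⟨0, by omega⟩ : Fin c), X ⟨1, by omega⟩; X ⟨2, by omega⟩, X ⟨3, by omega⟩] ∨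
      (U : Matrix (Fin 2) (Fin 2) ℂ).map MvPolynomial.C * E *
        (V : Matrix (Fin 2) (Fin 2) ℂ).map MvPolynomial.C =
        !![X (⟨0, by omega⟩ : Fin c), X ⟨2, by omega⟩; X ⟨1, by omega⟩, X ⟨3, by omega⟩] := by
  exact main_lemma ⟨0, by omega⟩ ⟨1, by omega⟩ ⟨2, by omega⟩ ⟨3, by omega⟩
    (Fin.ne_of_val_ne (by norm_num)) (Fin.ne_of_val_ne (by norm_num))
    (Fin.ne_of_val_ne (by norm_num)) (Fin.ne_of_val_ne (by norm_num))
    (Fin.ne_of_val_ne (by norm_num)) (Fin.ne_of_val_ne (by norm_num))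
    E hlin hdet
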